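/- arXiv:1207.5548 — 2 statements merged into one kernel-verified Lean document; each statement's English description precedes it below -/
import Mathlib

section
/- Fix integers n, j, m ≥ 1 with j ≤ n, a composition (n_1,…,n_j) of n into j positive parts, a real α < 1, and real weights V(n,k) with V(n,j) ≠ 0. Let r_1,…,r_m be nonnegative integers with R = ∑_{l=1}^{m} l·r_l ≤ m; put ρ = ∑_{l=1}^{m} r_l. Then the joint falling factorial moments of the conditional Gibbs sampling formula satisfy: ∑ [∏_{l=1}^{m} (w_l)_{[r_l]}]·Q(w) = (m!·∏_{l=1}^{m} [(1−α)_{l−1}]^{r_l}/((m−R)!·∏_{l=1}^{m}(l!)^{r_l}))·(1/V(n,j))·∑_{k=ρ}^{ρ+m−R} V(n+m,j+k)·S(m−R, k−ρ; α, −(n−jα)), where the outer sum ranges over all tuples (w_1,…,w_m) of nonnegative integers with ∑_{l=1}^{m} l·w_l ≤ m. -/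
/-- Rising factorial `(x)_n = x(x+1)⋯(x+n−1)`. -/
noncomputable def risingFac (x : ℝ) (n : ℕ) : ℝ := ∏ i ∈ Finset.range n, (x + i)

/-- Rising factorial with increment `α`: `(x)_{n↑α} = ∏_{i<n} (x + iα)`. -/
noncomputable def risingFacInc (x α : ℝ) (n : ℕ) : ℝ := ∏ i ∈ Finset.range n, (x + i * α)

/-- Falling factorial `(x)_{[n]} = x(x−1)⋯(x−n+1)`. -/
noncomputable def fallingFac (x : ℝ) (n : ℕ) : ℝ := ∏ i ∈ Finset.range n, (x - i)

/-- Compositions of `n` into `k` positive parts, as functions `Fin k → ℕ`. -/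
def compositions (n k : ℕ) : Finset (Fin k → ℕ) :=
  (Fintype.piFinset fun _ => Finset.range (n + 1)).filter
    (fun f => (∀ i, 0 < f i) ∧ ∑ i, f i = n)

/-- Tuples of `k` nonnegative integers summing to `n`. -/
def weakCompositions (n k : ℕ) : Finset (Fin k → ℕ) :=
  (Fintype.piFinset fun _ => Finset.range (n + 1)).filter (fun f => ∑ i, f i = n)

/-- Generalized (central) Stirling number
`S(n,k;α) = (n!/k!) ∑_{(n_1,…,n_k)} ∏_j (1−α)_{n_j−1}/n_j!`,
the sum over compositions of `n` into `k` positive parts. -/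
noncomputable def genStirling (α : ℝ) (n k : ℕ) : ℝ :=
  (Nat.factorial n : ℝ) / (Nat.factorial k : ℝ) *
    ∑ f ∈ compositions n k, ∏ j, risingFac (1 - α) (f j - 1) / (Nat.factorial (f j) : ℝ)

/-- Non-central generalized Stirling number
`S(n,k;α,γ) = ∑_{s=k}^n C(n,s) S(s,k;α) (−γ)_{n−s}`. -/
noncomputable def genStirlingNC (α γ : ℝ) (n k : ℕ) : ℝ :=
  ∑ s ∈ Finset.Icc k n, (n.choose s : ℝ) * genStirling α s k * risingFac (-γ) (n - s)

/-- Vectors `(w_1,…,w_m)` of nonnegative integers with `∑ i·w_i ≤ m`,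
encoded as `w : Fin m → ℕ` where index `i` represents size `i+1`. -/
def condCountVectors (m : ℕ) : Finset (Fin m → ℕ) :=
  (Fintype.piFinset fun _ => Finset.range (m + 1)).filter
    (fun w => ∑ i, (i.1 + 1) * w i ≤ m)

/-- The conditional Gibbs sampling formula
`Q(w) = m!·(V(n+m,j+k)/V(n,j))·((n−jα)_{m−s}/(m−s)!)·
∏_i [(1−α)_{i−1}]^{w_i}/((i!)^{w_i} w_i!)`, where `s = ∑ i·w_i` and `k = ∑ w_i`. -/
noncomputable def condSampling (α : ℝ) (V : ℕ → ℕ → ℝ) (n j m : ℕ)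
    (w : Fin m → ℕ) : ℝ :=
  (Nat.factorial m : ℝ) * (V (n + m) (j + ∑ i, w i) / V n j) *
    (risingFac ((n : ℝ) - j * α) (m - ∑ i, (i.1 + 1) * w i) /
      (Nat.factorial (m - ∑ i, (i.1 + 1) * w i) : ℝ)) *
    ∏ i, (risingFac (1 - α) i.1) ^ (w i) /
      ((Nat.factorial (i.1 + 1) : ℝ) ^ (w i) * (Nat.factorial (w i) : ℝ))

lemma mem_compositions {n k : ℕ} {f : Fin k → ℕ} :
    f ∈ compositions n k ↔ (∀ i, 0 < f i) ∧ ∑ i, f i = n := by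
  simp only [compositions, Finset.mem_filter, Fintype.mem_piFinset, Finset.mem_range]
  constructor
  · tauto
  · rintro ⟨h1, h2⟩
    refine ⟨fun i => ?_, h1, h2⟩
    have : f i ≤ n := h2 ▸ Finset.single_le_sum (f := f) (fun _ _ => Nat.zero_le _) (Finset.mem_univ i)
    omega


section Helpers

lemma compositions_eq_empty {n k : ℕ} (h : n < k) : compositions n k = ∅ := by
  ext f
  have hm : f ∈ compositions n k ↔ (∀ i, 0 < f i) ∧ ∑ i, f i = n := by
    simp only [compositions, Finset.mem_filter, Fintype.mem_piFinset, Finset.mem_range]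
    constructor
    · tauto
    · rintro ⟨h1, h2⟩
      refine ⟨fun i => ?_, h1, h2⟩
      have : f i ≤ n := h2 ▸ Finset.single_le_sum (f := f) (fun _ _ => Nat.zero_le _)
        (Finset.mem_univ i)
      omega
  simp only [hm, Finset.notMem_empty, iff_false]
  rintro ⟨h1, h2⟩
  have : k ≤ ∑ i, f i := by
    calc k = ∑ _i : Fin k, 1 := by simp
    _ ≤ ∑ i, f i := Finset.sum_le_sum (fun i _ => h1 i)
  omega

lemma genStirling_eq_zero {α : ℝ} {s κ : ℕ} (h : s < κ) : genStirling α s κ = 0 := by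
  rw [genStirling, compositions_eq_empty h, Finset.sum_empty, mul_zero]

lemma mem_condCountVectors {m : ℕ} {w : Fin m → ℕ} :
    w ∈ condCountVectors m ↔ ∑ i, (i.1 + 1) * w i ≤ m := by
  simp only [condCountVectors, Finset.mem_filter, Fintype.mem_piFinset, Finset.mem_range]
  constructor
  · tauto
  · intro h
    refine ⟨fun i => ?_, h⟩
    have h1 : (i.1 + 1) * w i ≤ m := le_trans (Finset.single_le_sum
      (f := fun l : Fin m => (l.1 + 1) * w l) (fun _ _ => Nat.zero_le _) (Finset.mem_univ i)) h
    have h2 : w i ≤ (i.1 + 1) * w i := Nat.le_mul_of_pos_left _ (Nat.succ_pos _)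
    omega

def Tset (m M : ℕ) : Finset (Fin m → ℕ) :=
  (Fintype.piFinset fun _ => Finset.range (M + 1)).filter
    (fun v => ∑ l, (l.1 + 1) * v l ≤ M)

lemma mem_Tset {m M : ℕ} {v : Fin m → ℕ} :
    v ∈ Tset m M ↔ ∑ l, (l.1 + 1) * v l ≤ M := by
  simp only [Tset, Finset.mem_filter, Fintype.mem_piFinset, Finset.mem_range]
  constructor
  · tauto
  · intro h
    refine ⟨fun i => ?_, h⟩
    have h1 : (i.1 + 1) * v i ≤ M := le_trans (Finset.single_le_sum
      (f := fun l : Fin m => (l.1 + 1) * v l) (fun _ _ => Nat.zero_le _) (Finset.mem_univ i)) h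
    have h2 : v i ≤ (i.1 + 1) * v i := Nat.le_mul_of_pos_left _ (Nat.succ_pos _)
    omega

lemma weight_le {m : ℕ} (v : Fin m → ℕ) : ∑ l, v l ≤ ∑ l, (l.1 + 1) * v l :=
  Finset.sum_le_sum (fun i _ => Nat.le_mul_of_pos_left _ (Nat.succ_pos _))

end Helpers

def vecSet (m κ s : ℕ) : Finset (Fin m → ℕ) :=
  (Fintype.piFinset fun _ => Finset.range (s + 1)).filter
    (fun v => (∑ l, v l = κ) ∧ (∑ l, (l.1 + 1) * v l = s))

lemma mem_vecSet {m κ s : ℕ} {v : Fin m → ℕ} :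
    v ∈ vecSet m κ s ↔ (∑ l, v l = κ) ∧ (∑ l, (l.1 + 1) * v l = s) := by
  simp only [vecSet, Finset.mem_filter, Fintype.mem_piFinset, Finset.mem_range]
  constructor
  · tauto
  · rintro ⟨h1, h2⟩
    refine ⟨fun i => ?_, h1, h2⟩
    have : (i.1 + 1) * v i ≤ s := h2 ▸ Finset.single_le_sum
      (f := fun l : Fin m => (l.1 + 1) * v l) (fun _ _ => Nat.zero_le _) (Finset.mem_univ i)
    nlinarith [v i]

lemma vec_extract (m κ s : ℕ) (l : Fin m) (c : ℕ → ℝ) :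
    ∑ v ∈ vecSet m (κ+1) s, (v l : ℝ) * ∏ i, c (i.1+1) ^ v i / (Nat.factorial (v i) : ℝ)
    = if l.1 + 1 ≤ s then
        c (l.1+1) * ∑ v ∈ vecSet m κ (s - (l.1+1)),
          ∏ i, c (i.1+1) ^ v i / (Nat.factorial (v i) : ℝ)
      else 0 := by
  split_ifs with hls
  · rw [← Finset.sum_filter_of_ne (p := fun v => 0 < v l)
      (by intro v _ hne; by_contra h; push_neg at h; interval_cases (v l) <;> simp at hne)]
    rw [Finset.mul_sum]
    refine Finset.sum_nbij' (fun v => Function.update v l (v l - 1))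
      (fun u => Function.update u l (u l + 1)) ?_ ?_ ?_ ?_ ?_
    · intro v hv
      simp only [Finset.mem_filter, mem_vecSet] at hv
      obtain ⟨⟨h1, h2⟩, hpos⟩ := hv
      rw [mem_vecSet]
      have e1 : ∑ i, Function.update v l (v l - 1) i
          = (v l - 1) + ∑ i ∈ Finset.univ.erase l, v i := by
        rw [← Finset.add_sum_erase _ _ (Finset.mem_univ l), Function.update_self]
        congr 1
        exact Finset.sum_congr rfl (fun i hi =>
          Function.update_of_ne (Finset.ne_of_mem_erase hi) _ _)
      have e2 : ∑ i, (i.1+1) * Function.update v l (v l - 1) i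
          = (l.1+1) * (v l - 1) + ∑ i ∈ Finset.univ.erase l, (i.1+1) * v i := by
        rw [← Finset.add_sum_erase _ _ (Finset.mem_univ l), Function.update_self]
        congr 1
        exact Finset.sum_congr rfl (fun i hi =>
          congrArg _ (Function.update_of_ne (Finset.ne_of_mem_erase hi) _ _))
      have e3 : ∑ i, v i = v l + ∑ i ∈ Finset.univ.erase l, v i :=
        (Finset.add_sum_erase _ _ (Finset.mem_univ l)).symm
      have e4 : ∑ i, (i.1+1) * v i
          = (l.1+1) * v l + ∑ i ∈ Finset.univ.erase l, (i.1+1) * v i :=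
        (Finset.add_sum_erase _ _ (Finset.mem_univ l)).symm
      have hh : (l.1+1) * v l = (l.1+1) * (v l - 1) + (l.1+1) := by
        obtain ⟨t, ht⟩ := Nat.exists_eq_add_of_lt hpos
        simp only [Nat.zero_add] at ht
        rw [ht]
        simp [Nat.mul_succ]
      exact ⟨by rw [e1]; omega, by rw [e2]; omega⟩
    · intro u hu
      rw [mem_vecSet] at hu
      obtain ⟨h1, h2⟩ := hu
      simp only [Finset.mem_filter, mem_vecSet]
      have e1 : ∑ i, Function.update u l (u l + 1) i
          = (u l + 1) + ∑ i ∈ Finset.univ.erase l, u i := by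
        rw [← Finset.add_sum_erase _ _ (Finset.mem_univ l), Function.update_self]
        congr 1
        exact Finset.sum_congr rfl (fun i hi =>
          Function.update_of_ne (Finset.ne_of_mem_erase hi) _ _)
      have e2 : ∑ i, (i.1+1) * Function.update u l (u l + 1) i
          = (l.1+1) * (u l + 1) + ∑ i ∈ Finset.univ.erase l, (i.1+1) * u i := by
        rw [← Finset.add_sum_erase _ _ (Finset.mem_univ l), Function.update_self]
        congr 1
        exact Finset.sum_congr rfl (fun i hi =>
          congrArg _ (Function.update_of_ne (Finset.ne_of_mem_erase hi) _ _))
      have e3 : ∑ i, u i = u l + ∑ i ∈ Finset.univ.erase l, u i :=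
        (Finset.add_sum_erase _ _ (Finset.mem_univ l)).symm
      have e4 : ∑ i, (i.1+1) * u i
          = (l.1+1) * u l + ∑ i ∈ Finset.univ.erase l, (i.1+1) * u i :=
        (Finset.add_sum_erase _ _ (Finset.mem_univ l)).symm
      have hh : (l.1+1) * (u l + 1) = (l.1+1) * u l + (l.1+1) := Nat.mul_succ _ _
      refine ⟨⟨by rw [e1]; omega, by rw [e2]; omega⟩, by simp⟩
    · intro v hv
      simp only [Finset.mem_filter] at hv
      ext i
      rcases eq_or_ne i l with rfl | h
      · simp only [Function.update_self]
        omega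
      · simp [Function.update_of_ne h]
    · intro u _
      ext i
      rcases eq_or_ne i l with rfl | h
      · simp
      · simp [Function.update_of_ne h]
    · intro v hv
      simp only [Finset.mem_filter, mem_vecSet] at hv
      obtain ⟨⟨h1, h2⟩, hpos⟩ := hv
      rw [← Finset.mul_prod_erase _ _ (Finset.mem_univ l),
          ← Finset.mul_prod_erase _ _ (Finset.mem_univ l)]
      have heq : ∏ i ∈ Finset.univ.erase l, c (i.1+1) ^ (Function.update v l (v l - 1) i) /
          (Nat.factorial (Function.update v l (v l - 1) i) : ℝ)
          = ∏ i ∈ Finset.univ.erase l, c (i.1+1) ^ v i / (Nat.factorial (v i) : ℝ) :=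
        Finset.prod_congr rfl (fun i hi => by
          rw [Function.update_of_ne (Finset.ne_of_mem_erase hi)])
      rw [heq, Function.update_self]
      obtain ⟨t, hvl⟩ := Nat.exists_eq_add_of_lt hpos
      simp only [Nat.zero_add] at hvl
      rw [hvl]
      simp only [Nat.add_sub_cancel, pow_succ, Nat.factorial_succ]
      have : (Nat.factorial t : ℝ) ≠ 0 := Nat.cast_ne_zero.mpr (Nat.factorial_ne_zero t)
      push_cast
      field_simp
  · apply Finset.sum_eq_zero
    intro v hv
    rw [mem_vecSet] at hv
    have : (l.1 + 1) * v l ≤ s := hv.2 ▸ Finset.single_le_sum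
      (f := fun i : Fin m => (i.1 + 1) * v i) (fun _ _ => Nat.zero_le _) (Finset.mem_univ l)
    have : v l = 0 := by nlinarith [v l]
    simp [this]

lemma comp_succ_sum (s κ : ℕ) (F : ℕ → ℝ) :
    ∑ f ∈ compositions s (κ+1), ∏ i, F (f i)
    = ∑ t ∈ Finset.Icc 1 s, F t * ∑ g ∈ compositions (s - t) κ, ∏ i, F (g i) := by
  simp only [Finset.mul_sum]
  conv_rhs => rw [Finset.sum_sigma']
  refine Finset.sum_nbij' (fun f => ⟨f (Fin.last κ), Fin.init f⟩)
    (fun p => Fin.snoc p.2 p.1) ?_ ?_ ?_ ?_ ?_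
  · intro f hf
    obtain ⟨h1, h2⟩ := mem_compositions.mp hf
    have hsum : ∑ i, f i = f (Fin.last κ) + ∑ i : Fin κ, Fin.init f i := by
      rw [Fin.sum_univ_castSucc]; rw [add_comm]; rfl
    simp only [Finset.mem_sigma, Finset.mem_Icc, mem_compositions]
    refine ⟨⟨h1 _, ?_⟩, fun i => h1 _, ?_⟩ <;> omega
  · intro p hp
    simp only [Finset.mem_sigma, Finset.mem_Icc, mem_compositions] at hp
    obtain ⟨⟨ht1, ht2⟩, hg1, hg2⟩ := hp
    rw [mem_compositions]
    constructor
    · intro i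
      refine Fin.lastCases ?_ (fun i => ?_) i
      · simp only [Fin.snoc_last]; omega
      · simpa using hg1 i
    · rw [Fin.sum_univ_castSucc]
      simp only [Fin.snoc_castSucc, Fin.snoc_last]
      omega
  · intro f _; exact Fin.snoc_init_self f
  · intro p _; ext
    · simp
    · simp [Fin.init_snoc]
  · intro f _
    rw [Fin.prod_univ_castSucc, mul_comm]
    rfl


lemma fin_ite_sum_eq_Icc (m s : ℕ) (hsm : s ≤ m) (G : ℕ → ℝ) :
    ∑ l : Fin m, (if l.1 + 1 ≤ s then G (l.1+1) else 0) = ∑ t ∈ Finset.Icc 1 s, G t := by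
  rw [Fin.sum_univ_eq_sum_range (fun l => if l + 1 ≤ s then G (l+1) else 0) m]
  rw [← Finset.sum_filter]
  have hf : (Finset.range m).filter (fun l => l + 1 ≤ s) = Finset.range s := by
    ext l
    simp only [Finset.mem_filter, Finset.mem_range]
    omega
  rw [hf]
  rw [show Finset.Icc 1 s = Finset.Ico 1 (s+1) by rfl, Finset.sum_Ico_eq_sum_range]
  simp only [Nat.add_sub_cancel]
  exact Finset.sum_congr rfl (fun i _ => by rw [add_comm])

lemma keyA (c : ℕ → ℝ) : ∀ κ s m : ℕ, s ≤ m →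
    (Nat.factorial κ : ℝ) * ∑ v ∈ vecSet m κ s,
        ∏ i, c (i.1+1) ^ v i / (Nat.factorial (v i) : ℝ)
    = ∑ f ∈ compositions s κ, ∏ i, c (f i) := by
  intro κ
  induction κ with
  | zero =>
    intro s m _
    rcases Nat.eq_zero_or_pos s with rfl | hs
    · have hv : vecSet m 0 0 = {fun _ => 0} := by
        ext v
        simp only [mem_vecSet, Finset.mem_singleton, funext_iff]
        constructor
        · rintro ⟨h1, _⟩ i
          exact Finset.sum_eq_zero_iff.mp h1 i (Finset.mem_univ i)
        · intro h
          constructor <;> · apply Finset.sum_eq_zero; intro i _; simp [h i]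
      have hc : compositions 0 0 = {fun i : Fin 0 => i.elim0} := by
        ext f
        simp only [mem_compositions, Finset.mem_singleton]
        constructor
        · intro _; exact funext (fun i => i.elim0)
        · intro _
          exact ⟨fun i => i.elim0, by simp⟩
      rw [hv, hc, Finset.sum_singleton, Finset.sum_singleton]
      simp
    · have hv : vecSet m 0 s = ∅ := by
        ext v
        simp only [mem_vecSet, Finset.notMem_empty, iff_false]
        rintro ⟨h1, h2⟩
        have hz : ∀ i ∈ Finset.univ, v i = 0 := Finset.sum_eq_zero_iff.mp h1
        have : ∑ l, (l.1 + 1) * v l = 0 :=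
          Finset.sum_eq_zero (fun i hi => by rw [hz i hi, Nat.mul_zero])
        omega
      have hc : compositions s 0 = ∅ := by
        ext f
        simp only [mem_compositions, Finset.notMem_empty, iff_false]
        rintro ⟨_, h2⟩
        simp only [Finset.univ_eq_empty, Finset.sum_empty] at h2
        omega
      rw [hv, hc]
      simp
  | succ κ ih =>
    intro s m hsm
    rw [comp_succ_sum]
    rw [← fin_ite_sum_eq_Icc m s hsm]
    have step1 : ((κ+1).factorial : ℝ) * ∑ v ∈ vecSet m (κ+1) s,
        ∏ i, c (i.1+1) ^ v i / (Nat.factorial (v i) : ℝ)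
        = (κ.factorial : ℝ) * ∑ l : Fin m, ∑ v ∈ vecSet m (κ+1) s,
            (v l : ℝ) * ∏ i, c (i.1+1) ^ v i / (Nat.factorial (v i) : ℝ) := by
      rw [Finset.sum_comm]
      rw [Nat.factorial_succ]
      push_cast
      rw [Finset.mul_sum, Finset.mul_sum]
      apply Finset.sum_congr rfl
      intro v hv
      rw [← Finset.sum_mul]
      have hcast : (∑ l, (v l : ℝ)) = (κ : ℝ) + 1 := by
        rw [← Nat.cast_sum, (mem_vecSet.mp hv).1]
        push_cast; ring
      rw [hcast]
      ring
    rw [step1]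
    have step2 : ∀ l : Fin m, ∑ v ∈ vecSet m (κ+1) s,
        (v l : ℝ) * ∏ i, c (i.1+1) ^ v i / (Nat.factorial (v i) : ℝ)
        = if l.1 + 1 ≤ s then
            c (l.1+1) * ∑ v ∈ vecSet m κ (s - (l.1+1)),
              ∏ i, c (i.1+1) ^ v i / (Nat.factorial (v i) : ℝ)
          else 0 := fun l => vec_extract m κ s l c
    rw [Finset.sum_congr rfl (fun l _ => step2 l), Finset.mul_sum]
    apply Finset.sum_congr rfl
    intro l _
    split_ifs with h
    · rw [← ih (s - (l.1+1)) m (by omega)]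
      ring
    · simp

noncomputable def cf (α : ℝ) (t : ℕ) : ℝ := risingFac (1 - α) (t - 1) / (Nat.factorial t : ℝ)

lemma genStirling_eq (α : ℝ) (s κ : ℕ) :
    genStirling α s κ = (Nat.factorial s : ℝ) / (Nat.factorial κ : ℝ) *
      ∑ f ∈ compositions s κ, ∏ i, cf α (f i) := rfl

lemma cf_succ (α : ℝ) (t : ℕ) :
    cf α (t + 1) = risingFac (1 - α) t / (Nat.factorial (t+1) : ℝ) := by
  simp [cf]

section Regroup

lemma regroup (m M : ℕ) (H : (Fin m → ℕ) → ℝ) :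
    ∑ v ∈ Tset m M, H v
    = ∑ s ∈ Finset.range (M+1), ∑ κ ∈ Finset.range (s+1), ∑ v ∈ vecSet m κ s, H v := by
  have hmap1 : ∀ v ∈ Tset m M, (∑ l, (l.1+1) * v l) ∈ Finset.range (M+1) := by
    intro v hv
    rw [Finset.mem_range]
    have := mem_Tset.mp hv
    omega
  rw [← Finset.sum_fiberwise_of_maps_to hmap1]
  apply Finset.sum_congr rfl
  intro s hs
  have hmap2 : ∀ v ∈ (Tset m M).filter (fun v => ∑ l, (l.1+1) * v l = s),
      (∑ l, v l) ∈ Finset.range (s+1) := by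
    intro v hv
    rw [Finset.mem_range]
    simp only [Finset.mem_filter] at hv
    have := weight_le v
    omega
  rw [← Finset.sum_fiberwise_of_maps_to hmap2]
  apply Finset.sum_congr rfl
  intro κ hκ
  apply Finset.sum_congr _ (fun _ _ => rfl)
  ext v
  simp only [Finset.mem_filter, mem_Tset, mem_vecSet]
  rw [Finset.mem_range] at hs
  constructor
  · tauto
  · rintro ⟨h1, h2⟩
    exact ⟨⟨by omega, h2⟩, h1⟩

lemma sumW (α : ℝ) (κ s m : ℕ) (hsm : s ≤ m) :
    ∑ v ∈ vecSet m κ s, ∏ i, cf α (i.1+1) ^ v i / (Nat.factorial (v i) : ℝ)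
    = genStirling α s κ / (Nat.factorial s : ℝ) := by
  have h := keyA (cf α) κ s m hsm
  have hκ : (Nat.factorial κ : ℝ) ≠ 0 := Nat.cast_ne_zero.mpr (Nat.factorial_ne_zero κ)
  have hs : (Nat.factorial s : ℝ) ≠ 0 := Nat.cast_ne_zero.mpr (Nat.factorial_ne_zero s)
  rw [genStirling_eq, ← h]
  field_simp

lemma swap_NC (M ρ : ℕ) (α γ' : ℝ) (Vf : ℕ → ℝ) :
    ∑ k ∈ Finset.Icc ρ (ρ + M), Vf k * genStirlingNC α (-γ') M (k - ρ)
    = ∑ s ∈ Finset.range (M+1), ∑ κ ∈ Finset.range (s+1),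
        Vf (ρ + κ) * ((M.choose s : ℝ) * genStirling α s κ * risingFac γ' (M - s)) := by
  have step1 : ∑ k ∈ Finset.Icc ρ (ρ + M), Vf k * genStirlingNC α (-γ') M (k - ρ)
      = ∑ κ ∈ Finset.range (M+1), Vf (ρ + κ) * genStirlingNC α (-γ') M κ := by
    refine Finset.sum_nbij' (fun k => k - ρ) (fun κ => ρ + κ) ?_ ?_ ?_ ?_ ?_
    · intro k hk; rw [Finset.mem_Icc] at hk; rw [Finset.mem_range]; omega
    · intro κ hκ; rw [Finset.mem_range] at hκ; rw [Finset.mem_Icc]; omega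
    · intro k hk; rw [Finset.mem_Icc] at hk; omega
    · intro κ _; omega
    · intro k hk; rw [Finset.mem_Icc] at hk
      rw [Nat.add_sub_cancel' hk.1]
  rw [step1]
  simp only [genStirlingNC, neg_neg, Finset.mul_sum]
  have step2 : ∀ κ ∈ Finset.range (M+1),
      ∑ s ∈ Finset.Icc κ M, Vf (ρ + κ) * ((M.choose s : ℝ) * genStirling α s κ *
        risingFac γ' (M - s))
      = ∑ s ∈ Finset.range (M+1), Vf (ρ + κ) * ((M.choose s : ℝ) * genStirling α s κ *
        risingFac γ' (M - s)) := by
    intro κ hκ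
    apply Finset.sum_subset
    · intro s hs; rw [Finset.mem_Icc] at hs; rw [Finset.mem_range]; omega
    · intro s hs1 hs2
      rw [Finset.mem_range] at hs1; rw [Finset.mem_Icc] at hs2
      rw [genStirling_eq_zero (by omega)]
      ring
  rw [Finset.sum_congr rfl step2, Finset.sum_comm]
  apply Finset.sum_congr rfl
  intro s _
  symm
  apply Finset.sum_subset
  · intro κ hκ; rw [Finset.mem_range] at *; omega
  · intro κ hκ1 hκ2
    rw [Finset.mem_range] at hκ1 hκ2
    rw [genStirling_eq_zero (by omega)]
    ring

end Regroup

lemma fallingFac_succ_left (x : ℝ) (k : ℕ) :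
    fallingFac x (k + 1) = x * fallingFac (x - 1) k := by
  rw [fallingFac, Finset.prod_range_succ', fallingFac]
  simp only [Nat.cast_zero, sub_zero, Nat.cast_add, Nat.cast_one]
  rw [mul_comm]
  congr 1
  apply Finset.prod_congr rfl
  intro i _
  ring

lemma fallingFac_nat_of_lt {N k : ℕ} (h : N < k) : fallingFac (N : ℝ) k = 0 := by
  apply Finset.prod_eq_zero (Finset.mem_range.mpr h)
  simp

lemma fallingFac_nat_add (v k : ℕ) :
    fallingFac ((v + k : ℕ) : ℝ) k = (Nat.factorial (v + k) : ℝ) / (Nat.factorial v : ℝ) := by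
  induction k with
  | zero =>
    simp [fallingFac]
    rw [div_self]
    positivity
  | succ k ih =>
    rw [fallingFac_succ_left]
    have : ((v + (k+1) : ℕ) : ℝ) - 1 = ((v + k : ℕ) : ℝ) := by push_cast; ring
    rw [this, ih]
    rw [show v + (k+1) = (v+k)+1 from rfl, Nat.factorial_succ]
    push_cast
    rw [mul_div_assoc]

lemma term_eq (α : ℝ) (V : ℕ → ℕ → ℝ) (n j m : ℕ) (r v : Fin m → ℕ) :
    (∏ l, fallingFac ((r l + v l : ℕ) : ℝ) (r l)) * condSampling α V n j m (fun l => r l + v l)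
    = (∏ l, (risingFac (1-α) l.1) ^ r l / ((Nat.factorial (l.1+1) : ℝ)) ^ r l) *
      ((Nat.factorial m : ℝ) *
        (V (n + m) (j + ((∑ l, r l) + ∑ l, v l)) / V n j) *
        (risingFac ((n:ℝ) - j*α) ((m - ∑ l, (l.1+1)*r l) - ∑ l, (l.1+1)*v l) /
          (Nat.factorial ((m - ∑ l, (l.1+1)*r l) - ∑ l, (l.1+1)*v l) : ℝ)) *
        ∏ l, cf α (l.1+1) ^ v l / (Nat.factorial (v l) : ℝ)) := by
  rw [condSampling]
  have e1 : ∑ i : Fin m, (r i + v i) = (∑ l, r l) + ∑ l, v l := Finset.sum_add_distrib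
  have e2 : ∑ i : Fin m, (i.1+1) * (r i + v i)
      = (∑ l, (l.1+1) * r l) + ∑ l, (l.1+1) * v l := by
    rw [← Finset.sum_add_distrib]
    exact Finset.sum_congr rfl (fun i _ => Nat.mul_add _ _ _)
  have e3 : m - ((∑ l, (l.1+1) * r l) + ∑ l, (l.1+1) * v l)
      = (m - ∑ l, (l.1+1)*r l) - ∑ l, (l.1+1)*v l := (Nat.sub_sub _ _ _).symm
  rw [e1, e2, e3]
  have key : (∏ l, fallingFac ((r l + v l : ℕ) : ℝ) (r l)) *
      (∏ l : Fin m, (risingFac (1 - α) l.1) ^ (r l + v l) /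
        ((Nat.factorial (l.1 + 1) : ℝ) ^ (r l + v l) * (Nat.factorial (r l + v l) : ℝ)))
      = (∏ l, (risingFac (1-α) l.1) ^ r l / ((Nat.factorial (l.1+1) : ℝ)) ^ r l) *
        (∏ l, cf α (l.1+1) ^ v l / (Nat.factorial (v l) : ℝ)) := by
    rw [← Finset.prod_mul_distrib, ← Finset.prod_mul_distrib]
    apply Finset.prod_congr rfl
    intro l _
    rw [add_comm (r l) (v l), fallingFac_nat_add, cf_succ]
    have hB : ((Nat.factorial (l.1+1) : ℝ)) ≠ 0 := Nat.cast_ne_zero.mpr (Nat.factorial_ne_zero _)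
    have hv : ((Nat.factorial (v l) : ℝ)) ≠ 0 := Nat.cast_ne_zero.mpr (Nat.factorial_ne_zero _)
    have hrv : ((Nat.factorial (v l + r l) : ℝ)) ≠ 0 := Nat.cast_ne_zero.mpr (Nat.factorial_ne_zero _)
    rw [add_comm (v l) (r l)] at hrv ⊢
    rw [div_pow, pow_add, pow_add]
    field_simp
  calc (∏ l, fallingFac ((r l + v l : ℕ) : ℝ) (r l)) *
      ((Nat.factorial m : ℝ) * (V (n + m) (j + ((∑ l, r l) + ∑ l, v l)) / V n j) *
        (risingFac ((n:ℝ) - j*α) ((m - ∑ l, (l.1+1)*r l) - ∑ l, (l.1+1)*v l) /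
          (Nat.factorial ((m - ∑ l, (l.1+1)*r l) - ∑ l, (l.1+1)*v l) : ℝ)) *
        ∏ l : Fin m, (risingFac (1 - α) l.1) ^ (r l + v l) /
          ((Nat.factorial (l.1 + 1) : ℝ) ^ (r l + v l) * (Nat.factorial (r l + v l) : ℝ)))
      = ((Nat.factorial m : ℝ) * (V (n + m) (j + ((∑ l, r l) + ∑ l, v l)) / V n j) *
        (risingFac ((n:ℝ) - j*α) ((m - ∑ l, (l.1+1)*r l) - ∑ l, (l.1+1)*v l) /
          (Nat.factorial ((m - ∑ l, (l.1+1)*r l) - ∑ l, (l.1+1)*v l) : ℝ))) *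
        ((∏ l, fallingFac ((r l + v l : ℕ) : ℝ) (r l)) *
         ∏ l : Fin m, (risingFac (1 - α) l.1) ^ (r l + v l) /
          ((Nat.factorial (l.1 + 1) : ℝ) ^ (r l + v l) * (Nat.factorial (r l + v l) : ℝ))) := by
        ring
    _ = _ := by rw [key]; ring

/-- Joint falling factorial moments of the conditional Gibbs sampling formula. -/
theorem condSampling_joint_fallingFactorial_moments (n j m : ℕ)
    (hn : 1 ≤ n) (hj : 1 ≤ j) (hm : 1 ≤ m) (hjn : j ≤ n)
    (nv : Fin j → ℕ) (hnv : ∀ i, 0 < nv i) (hsum : ∑ i, nv i = n)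
    (α : ℝ) (hα : α < 1) (V : ℕ → ℕ → ℝ) (hV : V n j ≠ 0)
    (r : Fin m → ℕ) (hR : ∑ l, (l.1 + 1) * r l ≤ m) :
    ∑ w ∈ condCountVectors m,
        (∏ l, fallingFac (w l : ℝ) (r l)) * condSampling α V n j m w =
      (Nat.factorial m : ℝ) * (∏ l, (risingFac (1 - α) l.1) ^ (r l)) /
          ((Nat.factorial (m - ∑ l, (l.1 + 1) * r l) : ℝ) *
            ∏ l, (Nat.factorial (l.1 + 1) : ℝ) ^ (r l)) *
        (1 / V n j) *
        ∑ k ∈ Finset.Icc (∑ l, r l) (∑ l, r l + (m - ∑ l, (l.1 + 1) * r l)),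
          V (n + m) (j + k) *
            genStirlingNC α (-((n : ℝ) - j * α)) (m - ∑ l, (l.1 + 1) * r l)
              (k - ∑ l, r l) := by
  classical
  set R : ℕ := ∑ l, (l.1 + 1) * r l with hRdef
  set ρ : ℕ := ∑ l, r l with hρdef
  set M : ℕ := m - R with hMdef
  set γ' : ℝ := (n : ℝ) - j * α with hγdef
  -- Step O1: restrict to w ≥ r pointwise
  have hO1 : ∑ w ∈ condCountVectors m,
        (∏ l, fallingFac (w l : ℝ) (r l)) * condSampling α V n j m w
      = ∑ w ∈ (condCountVectors m).filter (fun w => ∀ l, r l ≤ w l),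
        (∏ l, fallingFac (w l : ℝ) (r l)) * condSampling α V n j m w := by
    symm
    apply Finset.sum_filter_of_ne
    intro w _ hne l
    by_contra hlt
    push_neg at hlt
    apply hne
    rw [Finset.prod_eq_zero (Finset.mem_univ l) (fallingFac_nat_of_lt hlt), zero_mul]
  rw [hO1]
  -- Step O2: reindex w = r + v
  have hO2 : ∑ w ∈ (condCountVectors m).filter (fun w => ∀ l, r l ≤ w l),
        (∏ l, fallingFac (w l : ℝ) (r l)) * condSampling α V n j m w
      = ∑ v ∈ Tset m M,
        (∏ l, fallingFac ((r l + v l : ℕ) : ℝ) (r l)) *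
          condSampling α V n j m (fun l => r l + v l) := by
    refine Finset.sum_nbij' (fun w => fun l => w l - r l) (fun v => fun l => r l + v l)
      ?_ ?_ ?_ ?_ ?_
    · intro w hw
      simp only [Finset.mem_filter, mem_condCountVectors] at hw
      obtain ⟨hw1, hw2⟩ := hw
      rw [mem_Tset]
      try dsimp only
      have hsum' : (∑ l, (l.1 + 1) * (w l - r l)) + R = ∑ l, (l.1 + 1) * w l := by
        rw [hRdef, ← Finset.sum_add_distrib]
        apply Finset.sum_congr rfl
        intro i _
        rw [← Nat.mul_add, Nat.sub_add_cancel (hw2 i)]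
      omega
    · intro v hv
      rw [mem_Tset] at hv
      simp only [Finset.mem_filter, mem_condCountVectors]
      have hsum' : (∑ l, (l.1 + 1) * (r l + v l))
          = R + ∑ l, (l.1 + 1) * v l := by
        rw [hRdef, ← Finset.sum_add_distrib]
        apply Finset.sum_congr rfl
        intro i _
        rw [Nat.mul_add]
      try dsimp only
      constructor
      · omega
      · intro l; omega
    · intro w hw
      simp only [Finset.mem_filter, mem_condCountVectors] at hw
      funext l
      have := hw.2 l
      try dsimp only
      omega
    · intro v _
      funext l
      try dsimp only
      omega
    · intro w hw
      simp only [Finset.mem_filter, mem_condCountVectors] at hw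
      congr 1
      · apply Finset.prod_congr rfl
        intro l _
        try dsimp only
        have hl : r l + (w l - r l) = w l := by have := hw.2 l; omega
        rw [hl]
      · apply congrArg
        funext l
        try dsimp only
        have := hw.2 l
        omega
  rw [hO2]
  -- Step O3: per-term algebra
  have hO3 : ∑ v ∈ Tset m M,
        (∏ l, fallingFac ((r l + v l : ℕ) : ℝ) (r l)) *
          condSampling α V n j m (fun l => r l + v l)
      = ∑ v ∈ Tset m M,
        (∏ l, (risingFac (1-α) l.1) ^ r l / ((Nat.factorial (l.1+1) : ℝ)) ^ r l) *
          ((Nat.factorial m : ℝ) * (V (n + m) (j + (ρ + ∑ l, v l)) / V n j) *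
            (risingFac γ' (M - ∑ l, (l.1+1)*v l) /
              (Nat.factorial (M - ∑ l, (l.1+1)*v l) : ℝ)) *
            ∏ l, cf α (l.1+1) ^ v l / (Nat.factorial (v l) : ℝ)) :=
    Finset.sum_congr rfl (fun v _ => term_eq α V n j m r v)
  rw [hO3]
  -- Step O4: regroup by (s, κ) and evaluate inner sums via sumW
  rw [regroup m M]
  have hMm : M ≤ m := Nat.sub_le _ _
  have hO4 : ∀ s ∈ Finset.range (M+1), ∀ κ ∈ Finset.range (s+1),
      ∑ v ∈ vecSet m κ s,
        (∏ l, (risingFac (1-α) l.1) ^ r l / ((Nat.factorial (l.1+1) : ℝ)) ^ r l) *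
          ((Nat.factorial m : ℝ) * (V (n + m) (j + (ρ + ∑ l, v l)) / V n j) *
            (risingFac γ' (M - ∑ l, (l.1+1)*v l) /
              (Nat.factorial (M - ∑ l, (l.1+1)*v l) : ℝ)) *
            ∏ l, cf α (l.1+1) ^ v l / (Nat.factorial (v l) : ℝ))
      = (∏ l, (risingFac (1-α) l.1) ^ r l / ((Nat.factorial (l.1+1) : ℝ)) ^ r l) *
          ((Nat.factorial m : ℝ) * (V (n + m) (j + (ρ + κ)) / V n j) *
            (risingFac γ' (M - s) / (Nat.factorial (M - s) : ℝ))) *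
          (genStirling α s κ / (Nat.factorial s : ℝ)) := by
    intro s hs κ hκ
    rw [Finset.mem_range] at hs hκ
    have heach : ∀ v ∈ vecSet m κ s,
        (∏ l, (risingFac (1-α) l.1) ^ r l / ((Nat.factorial (l.1+1) : ℝ)) ^ r l) *
          ((Nat.factorial m : ℝ) * (V (n + m) (j + (ρ + ∑ l, v l)) / V n j) *
            (risingFac γ' (M - ∑ l, (l.1+1)*v l) /
              (Nat.factorial (M - ∑ l, (l.1+1)*v l) : ℝ)) *
            ∏ l, cf α (l.1+1) ^ v l / (Nat.factorial (v l) : ℝ))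
        = (∏ l, (risingFac (1-α) l.1) ^ r l / ((Nat.factorial (l.1+1) : ℝ)) ^ r l) *
          ((Nat.factorial m : ℝ) * (V (n + m) (j + (ρ + κ)) / V n j) *
            (risingFac γ' (M - s) / (Nat.factorial (M - s) : ℝ))) *
          (∏ l, cf α (l.1+1) ^ v l / (Nat.factorial (v l) : ℝ)) := by
      intro v hv
      obtain ⟨h1, h2⟩ := mem_vecSet.mp hv
      rw [h1, h2]
      ring
    rw [Finset.sum_congr rfl heach, ← Finset.mul_sum, sumW α κ s m (le_trans (by omega) hMm)]
  rw [Finset.sum_congr rfl (fun s hs => Finset.sum_congr rfl (fun κ hκ => hO4 s hs κ hκ))]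
  -- Step O5: transform the RHS
  rw [swap_NC M ρ α γ' (fun k => V (n + m) (j + k))]
  simp only [Finset.mul_sum]
  apply Finset.sum_congr rfl
  intro s hs
  apply Finset.sum_congr rfl
  intro κ hκ
  rw [Finset.mem_range] at hs hκ
  -- final scalar identity
  have hchoose : (M.choose s : ℝ) * (Nat.factorial s : ℝ) * (Nat.factorial (M - s) : ℝ)
      = (Nat.factorial M : ℝ) := by
    rw [← Nat.cast_mul, ← Nat.cast_mul, Nat.choose_mul_factorial_mul_factorial (by omega)]
  have hprod : (∏ l, (risingFac (1-α) l.1) ^ r l / ((Nat.factorial (l.1+1) : ℝ)) ^ r l)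
      = (∏ l, (risingFac (1-α) l.1) ^ r l) / (∏ l, ((Nat.factorial (l.1+1) : ℝ)) ^ r l) :=
    Finset.prod_div_distrib _ _
  have hMf : (Nat.factorial M : ℝ) ≠ 0 := Nat.cast_ne_zero.mpr (Nat.factorial_ne_zero _)
  have hsf : (Nat.factorial s : ℝ) ≠ 0 := Nat.cast_ne_zero.mpr (Nat.factorial_ne_zero _)
  have hMsf : (Nat.factorial (M - s) : ℝ) ≠ 0 := Nat.cast_ne_zero.mpr (Nat.factorial_ne_zero _)
  have hBf : (∏ l, ((Nat.factorial (l.1+1) : ℝ)) ^ r l) ≠ 0 :=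
    Finset.prod_ne_zero_iff.mpr (fun l _ =>
      pow_ne_zero _ (Nat.cast_ne_zero.mpr (Nat.factorial_ne_zero _)))
  rw [hprod]
  field_simp
  rw [← hchoose]
  ring
end

section
/- Fix integers n, j, m ≥ 1 with j ≤ n, a composition (n_1,…,n_j) of n into j positive parts, a real α < 1, and real weights V(n,k) with V(n,j) ≠ 0. Let 1 ≤ l ≤ m and 0 ≤ x ≤ ⌊m/l⌋. Then the law of the number of new blocks of size l under the conditional Gibbs sampling formula satisfies: ∑_{w : w_l = x} Q(w) = ([(1−α)_{l−1}]^x/(x!·(l!)^x))·(m!/V(n,j))·∑_{r=0}^{⌊m/l⌋−x} ((−1)^r·[(1−α)_{l−1}]^r/(r!·(l!)^r·(m−rl−xl)!))·∑_{k=r+x}^{r+x+m−rl−xl} V(n+m,j+k)·S(m−rl−xl, k−r−x; α, −(n−jα)), where the left sum ranges over all tuples (w_1,…,w_m) of nonnegative integers with ∑_{i=1}^{m} i·w_i ≤ m and w_l = x. -/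
open Finset
namespace CondLaw

variable {m : ℕ}

def box (m : ℕ) : Finset (Fin m → ℕ) := Fintype.piFinset fun _ => Finset.range (m+1)

def sN {m : ℕ} (w : Fin m → ℕ) : ℕ := ∑ i, (i.1+1) * w i
def kN {m : ℕ} (w : Fin m → ℕ) : ℕ := ∑ i, w i

lemma coord_le_sN (w : Fin m → ℕ) (i : Fin m) : (i.1+1) * w i ≤ sN w :=
  Finset.single_le_sum (f := fun j => (j.1+1) * w j) (fun _ _ => Nat.zero_le _) (mem_univ i)

lemma kN_le_sN (w : Fin m → ℕ) : kN w ≤ sN w :=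
  Finset.sum_le_sum fun i _ => Nat.le_mul_of_pos_left _ (Nat.succ_pos _)

lemma mem_box_of (w : Fin m → ℕ) (h : sN w ≤ m) : w ∈ box m := by
  simp only [box, Fintype.mem_piFinset, mem_range]
  intro i
  have h1 := coord_le_sN w i
  have h2 : w i ≤ (i.1+1) * w i := Nat.le_mul_of_pos_left _ (Nat.succ_pos _)
  omega

def vecs (m n k : ℕ) : Finset (Fin m → ℕ) := (box m).filter fun w => sN w = n ∧ kN w = k

lemma mem_vecs {n k : ℕ} (h : n ≤ m) (w : Fin m → ℕ) :
    w ∈ vecs m n k ↔ sN w = n ∧ kN w = k := by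
  constructor
  · intro hw; exact (mem_filter.1 hw).2
  · intro hw; exact mem_filter.2 ⟨mem_box_of w (hw.1 ▸ h), hw⟩

lemma mem_compositions {n k : ℕ} (f : Fin k → ℕ) :
    f ∈ compositions n k ↔ (∀ i, 0 < f i) ∧ ∑ i, f i = n := by
  constructor
  · intro hf; exact (mem_filter.1 hf).2
  · intro hf
    refine mem_filter.2 ⟨?_, hf⟩
    simp only [Fintype.mem_piFinset, mem_range]
    intro i
    have : f i ≤ ∑ j, f j := Finset.single_le_sum (fun _ _ => Nat.zero_le _) (mem_univ i)
    omega

noncomputable def Wsum (g : ℕ → ℝ) (m n k : ℕ) : ℝ :=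
  ∑ w ∈ vecs m n k, ∏ i, g (i.1+1) ^ (w i) / ((w i).factorial : ℝ)

lemma vecs_eq_empty_of_lt {n k : ℕ} (h : n < k) : vecs m n k = ∅ := by
  rw [Finset.eq_empty_iff_forall_notMem]
  intro w hw
  obtain ⟨hs, hk⟩ := (mem_filter.1 hw).2
  have := kN_le_sN w
  omega

lemma Wsum_eq_zero_of_lt (g : ℕ → ℝ) {n k : ℕ} (h : n < k) : Wsum g m n k = 0 := by
  rw [Wsum, vecs_eq_empty_of_lt h, Finset.sum_empty]

lemma vecs_zero (hnm : 0 ≤ m) : vecs m 0 0 = {fun _ => 0} := by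
  ext w
  rw [mem_vecs (Nat.zero_le m)]
  simp only [Finset.mem_singleton]
  constructor
  · rintro ⟨hs, -⟩
    funext i
    have h1 := coord_le_sN w i
    rw [hs] at h1
    rcases Nat.mul_eq_zero.1 (Nat.eq_zero_of_le_zero h1) with h | h
    · omega
    · exact h
  · rintro rfl
    constructor <;> simp [sN, kN]

lemma sN_update (w : Fin m → ℕ) (i : Fin m) (v : ℕ) :
    sN (Function.update w i v) + (i.1+1) * w i = sN w + (i.1+1) * v := by
  unfold sN
  rw [Finset.sum_eq_add_sum_sdiff_singleton_of_mem (mem_univ i)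
      (fun j => (j.1+1) * Function.update w i v j),
    Finset.sum_eq_add_sum_sdiff_singleton_of_mem (mem_univ i) (fun j => (j.1+1) * w j)]
  have : ∑ j ∈ univ \ {i}, (j.1+1) * Function.update w i v j
      = ∑ j ∈ univ \ {i}, (j.1+1) * w j := by
    apply Finset.sum_congr rfl
    intro j hj
    rw [Function.update_of_ne (by simpa using (Finset.mem_sdiff.1 hj).2)]
  rw [this, Function.update_self]
  ring

lemma kN_update (w : Fin m → ℕ) (i : Fin m) (v : ℕ) :
    kN (Function.update w i v) + w i = kN w + v := by
  unfold kN
  rw [Finset.sum_eq_add_sum_sdiff_singleton_of_mem (mem_univ i)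
      (fun j => Function.update w i v j),
    Finset.sum_eq_add_sum_sdiff_singleton_of_mem (mem_univ i) (fun j => w j)]
  have : ∑ j ∈ univ \ {i}, Function.update w i v j = ∑ j ∈ univ \ {i}, w j := by
    apply Finset.sum_congr rfl
    intro j hj
    rw [Function.update_of_ne (by simpa using (Finset.mem_sdiff.1 hj).2)]
  rw [this, Function.update_self]
  ring

lemma prod_update_split (G : (i : Fin m) → ℕ → ℝ) (w : Fin m → ℕ) (i : Fin m) (v : ℕ) :
    ∏ j, G j (Function.update w i v j) = G i v * ∏ j ∈ univ \ {i}, G j (w j) := by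
  rw [Finset.prod_eq_mul_prod_sdiff_singleton_of_mem (mem_univ i)]
  rw [Function.update_self]
  congr 1
  apply Finset.prod_congr rfl
  intro j hj
  rw [Function.update_of_ne (by simpa using (Finset.mem_sdiff.1 hj).2)]


lemma sN_le_mul (w : Fin m → ℕ) : sN w ≤ m * kN w := by
  unfold sN kN
  rw [Finset.mul_sum]
  apply Finset.sum_le_sum
  intro i _
  exact Nat.mul_le_mul_right _ (by omega)

lemma Wsum_zero (g : ℕ → ℝ) (n : ℕ) : Wsum g m n 0 = if n = 0 then 1 else 0 := by
  rcases Nat.eq_zero_or_pos n with rfl | hn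
  · rw [if_pos rfl, Wsum, vecs_zero (Nat.zero_le m)]
    simp
  · rw [if_neg (by omega), Wsum]
    have : vecs m n 0 = ∅ := by
      rw [Finset.eq_empty_iff_forall_notMem]
      intro w hw
      obtain ⟨hs, hk⟩ := (mem_filter.1 hw).2
      have := sN_le_mul w
      rw [hs, hk] at this
      omega
    rw [this, Finset.sum_empty]

lemma compSum_zero (g : ℕ → ℝ) (n : ℕ) :
    ∑ f ∈ compositions n 0, ∏ j, g (f j) = if n = 0 then 1 else 0 := by
  rcases Nat.eq_zero_or_pos n with rfl | hn
  · rw [if_pos rfl]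
    have h0 : ∀ f : Fin 0 → ℕ, f = (fun i => i.elim0) := fun f => funext fun i => i.elim0
    have : compositions 0 0 = {(fun i : Fin 0 => i.elim0)} := by
      ext f
      simp only [mem_compositions, Finset.mem_singleton]
      constructor
      · intro _; exact h0 f
      · intro _
        refine ⟨fun i => i.elim0, ?_⟩
        simp
    rw [this]
    simp
  · rw [if_neg (by omega)]
    have : compositions n 0 = ∅ := by
      rw [Finset.eq_empty_iff_forall_notMem]
      intro f hf
      obtain ⟨-, hsum⟩ := (mem_compositions f).1 hf
      simp at hsum
      omega
    rw [this, Finset.sum_empty]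

lemma wsum_rec (g : ℕ → ℝ) (n k : ℕ) (hnm : n ≤ m) :
    ((k:ℝ)+1) * Wsum g m n (k+1)
      = ∑ c ∈ Finset.range n, g (c+1) * Wsum g m (n - (c+1)) k := by
  have step1 : ((k:ℝ)+1) * Wsum g m n (k+1)
      = ∑ i : Fin m, ∑ w ∈ vecs m n (k+1),
          (w i : ℝ) * ∏ j, g (j.1+1)^(w j)/((w j).factorial : ℝ) := by
    rw [Finset.sum_comm, Wsum, Finset.mul_sum]
    apply Finset.sum_congr rfl
    intro w hw
    have hk : kN w = k+1 := ((mem_vecs hnm w).1 hw).2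
    rw [← Finset.sum_mul]
    congr 1
    have h2 : (∑ i : Fin m, (w i : ℝ)) = ((kN w : ℕ) : ℝ) := by
      rw [kN]; push_cast; ring
    rw [h2, hk]; push_cast; ring
  have step3 : ∀ i : Fin m,
      (∑ w ∈ vecs m n (k+1), (w i : ℝ) * ∏ j, g (j.1+1)^(w j)/((w j).factorial : ℝ))
      = if i.1 + 1 ≤ n then g (i.1+1) * Wsum g m (n - (i.1+1)) k else 0 := by
    intro i
    rw [← Finset.sum_filter_of_ne (p := fun w => w i ≠ 0)
      (by intro w _ hne h0; apply hne; rw [h0]; push_cast; ring)]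
    by_cases hc : i.1 + 1 ≤ n
    · rw [if_pos hc, Wsum, Finset.mul_sum]
      apply Finset.sum_nbij' (i := fun w => Function.update w i (w i - 1))
        (j := fun v => Function.update v i (v i + 1))
      · -- forward membership
        intro w hw
        obtain ⟨hw1, hwi⟩ := Finset.mem_filter.1 hw
        obtain ⟨hs, hk⟩ := (mem_vecs hnm w).1 hw1
        obtain ⟨c, hcw⟩ : ∃ c, w i = c + 1 := ⟨w i - 1, by omega⟩
        rw [mem_vecs (by omega)]
        constructor
        · have h1 := sN_update w i (w i - 1)
          rw [hcw] at h1 ⊢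
          have h2 : (i.1+1)*(c+1) = (i.1+1)*c + (i.1+1) := by ring
          simp only [Nat.add_sub_cancel] at h1 ⊢
          omega
        · have h1 := kN_update w i (w i - 1)
          omega
      · -- backward membership
        intro v hv
        obtain ⟨hs, hk⟩ := (mem_vecs (by omega) v).1 hv
        rw [Finset.mem_filter]
        constructor
        · rw [mem_vecs hnm]
          constructor
          · have h1 := sN_update v i (v i + 1)
            have h2 : (i.1+1)*(v i+1) = (i.1+1)*(v i) + (i.1+1) := by ring
            omega
          · have h1 := kN_update v i (v i + 1)
            omega
        · simp
      · intro w hw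
        obtain ⟨-, hwi⟩ := Finset.mem_filter.1 hw
        funext j
        rcases eq_or_ne j i with rfl | hne
        · simp only [Function.update_self]
          omega
        · simp only [Function.update_of_ne hne]
      · intro v _
        funext j
        rcases eq_or_ne j i with rfl | hne
        · simp only [Function.update_self]
          omega
        · simp only [Function.update_of_ne hne]
      · -- summand
        intro w hw
        obtain ⟨hw1, hwi⟩ := Finset.mem_filter.1 hw
        obtain ⟨c, hcw⟩ : ∃ c, w i = c + 1 := ⟨w i - 1, by omega⟩
        rw [prod_update_split (fun j c => g (j.1+1)^c/((c).factorial : ℝ)) w i (w i - 1),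
          Finset.prod_eq_mul_prod_sdiff_singleton_of_mem (Finset.mem_univ i)
            (fun j => g (j.1+1)^(w j)/((w j).factorial : ℝ))]
        rw [hcw]
        simp only [Nat.add_sub_cancel]
        rw [Nat.factorial_succ, pow_succ]
        have hfac : ((c.factorial : ℝ)) ≠ 0 := Nat.cast_ne_zero.2 c.factorial_ne_zero
        push_cast
        field_simp
    · rw [if_neg hc]
      apply Finset.sum_eq_zero
      intro w hw
      exfalso
      obtain ⟨hw1, hw2⟩ := Finset.mem_filter.1 hw
      obtain ⟨hs, -⟩ := (mem_vecs hnm w).1 hw1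
      have h1 := coord_le_sN w i
      have h2 : i.1 + 1 ≤ (i.1+1) * w i :=
        Nat.le_mul_of_pos_right _ (Nat.pos_of_ne_zero hw2)
      omega
  rw [step1]
  rw [Finset.sum_congr rfl (fun i _ => step3 i)]
  rw [Fin.sum_univ_eq_sum_range
    (fun c => if c + 1 ≤ n then g (c+1) * Wsum g m (n - (c+1)) k else 0) m]
  rw [← Finset.sum_subset (Finset.range_subset_range.2 hnm)
    (by intro c _ hc; rw [Finset.mem_range] at hc; rw [if_neg (by omega)])]
  apply Finset.sum_congr rfl
  intro c hc
  rw [Finset.mem_range] at hc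
  rw [if_pos (by omega)]

lemma compSum (g : ℕ → ℝ) (k : ℕ) : ∀ n, n ≤ m →
    ∑ f ∈ compositions n k, ∏ j, g (f j) = ((k).factorial : ℝ) * Wsum g m n k := by
  induction k with
  | zero =>
    intro n hnm
    rw [compSum_zero, Wsum_zero]
    simp
  | succ k ih =>
    intro n hnm
    have hrec : ∑ f ∈ compositions n (k+1), ∏ j, g (f j)
        = ∑ c ∈ Finset.range n, ∑ h ∈ compositions (n - (c+1)) k,
            g (c+1) * ∏ j, g (h j) := by
      rw [Finset.sum_sigma']
      apply Finset.sum_nbij'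
        (i := fun f => (⟨f 0 - 1, Fin.tail f⟩ : Σ _ : ℕ, Fin k → ℕ))
        (j := fun p => Fin.cons (p.1 + 1) p.2)
      · intro f hf
        obtain ⟨hpos, hsum⟩ := (mem_compositions f).1 hf
        have hf0 : f 0 ≤ n := hsum ▸ Finset.single_le_sum
          (f := fun j => f j) (fun _ _ => Nat.zero_le _) (Finset.mem_univ 0)
        have hf0p := hpos 0
        rw [Finset.mem_sigma, Finset.mem_range]
        refine ⟨show f 0 - 1 < n by omega, ?_⟩
        rw [mem_compositions]
        constructor
        · intro i2; exact hpos i2.succ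
        · simp only [Fin.tail]
          have hrel : f 0 + ∑ i : Fin k, f i.succ = n := by
            rw [← hsum, Fin.sum_univ_succ]
          omega
      · intro p hp
        rw [Finset.mem_sigma, Finset.mem_range] at hp
        obtain ⟨hc, hcomp⟩ := hp
        obtain ⟨hpos, hsum⟩ := (mem_compositions p.2).1 hcomp
        rw [mem_compositions]
        constructor
        · intro i2
          refine Fin.cases ?_ ?_ i2
          · simp
          · intro i3; simpa using hpos i3
        · rw [Fin.sum_univ_succ]
          simp only [Fin.cons_zero, Fin.cons_succ]
          omega
      · intro f hf
        obtain ⟨hpos, -⟩ := (mem_compositions f).1 hf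
        have h1 : f 0 - 1 + 1 = f 0 := by have := hpos 0; omega
        simp only [h1]
        exact Fin.cons_self_tail f
      · intro p hp
        refine Sigma.ext ?_ (heq_of_eq ?_)
        · simp
        · simp [Fin.tail_cons]
      · intro f hf
        obtain ⟨hpos, -⟩ := (mem_compositions f).1 hf
        have h1 : f 0 - 1 + 1 = f 0 := by have := hpos 0; omega
        rw [Fin.prod_univ_succ]
        simp only [h1, Fin.tail]
    rw [hrec]
    have : ∀ c ∈ Finset.range n, (∑ h ∈ compositions (n - (c+1)) k,
        g (c+1) * ∏ j, g (h j))
        = g (c+1) * (((k).factorial : ℝ) * Wsum g m (n - (c+1)) k) := by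
      intro c _
      rw [← Finset.mul_sum, ih (n - (c+1)) (by omega)]
    rw [Finset.sum_congr rfl this]
    have h2 : ∑ c ∈ Finset.range n, g (c+1) * (((k).factorial : ℝ) * Wsum g m (n - (c+1)) k)
        = ((k).factorial : ℝ) * ∑ c ∈ Finset.range n, g (c+1) * Wsum g m (n - (c+1)) k := by
      rw [Finset.mul_sum]
      apply Finset.sum_congr rfl
      intro c _
      ring
    rw [h2, ← wsum_rec g n k hnm]
    rw [Nat.factorial_succ]
    push_cast
    ring


noncomputable def gfun (α : ℝ) : ℕ → ℝ := fun c => risingFac (1-α) (c-1) / (c.factorial : ℝ)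

noncomputable def Tf (α : ℝ) {m : ℕ} (w : Fin m → ℕ) : ℝ :=
  ∏ i, (risingFac (1 - α) i.1) ^ (w i) /
      ((Nat.factorial (i.1 + 1) : ℝ) ^ (w i) * (Nat.factorial (w i) : ℝ))

lemma Tf_eq (α : ℝ) (w : Fin m → ℕ) :
    (∏ i, gfun α (i.1+1) ^ (w i) / ((w i).factorial : ℝ)) = Tf α w := by
  apply Finset.prod_congr rfl
  intro i _
  show (risingFac (1-α) (i.1+1-1) / (((i.1+1).factorial : ℕ) : ℝ)) ^ (w i) / ((w i).factorial : ℝ) = _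
  simp only [Nat.add_sub_cancel]
  rw [div_pow, div_div]

lemma Wsum_Tf (α : ℝ) (s κ : ℕ) :
    Wsum (gfun α) m s κ = ∑ w ∈ vecs m s κ, Tf α w :=
  Finset.sum_congr rfl fun w _ => Tf_eq α w

lemma genStirling_eq (α : ℝ) (s κ : ℕ) (hsm : s ≤ m) :
    genStirling α s κ = ((s.factorial : ℝ)) * Wsum (gfun α) m s κ := by
  rw [genStirling]
  rw [show (∑ f ∈ compositions s κ, ∏ j, risingFac (1-α) (f j - 1) / ((f j).factorial : ℝ))
      = ∑ f ∈ compositions s κ, ∏ j, gfun α (f j) from rfl]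
  rw [compSum (gfun α) κ s hsm]
  have hκ : ((κ.factorial : ℝ)) ≠ 0 := Nat.cast_ne_zero.2 κ.factorial_ne_zero
  field_simp

noncomputable def Ufun (α β : ℝ) (V : ℕ → ℕ → ℝ) (n j m M c : ℕ) : ℝ :=
  ∑ w ∈ (box m).filter (fun w => sN w ≤ M),
    V (n+m) (j + c + kN w) *
      (risingFac β (M - sN w) / (((M - sN w).factorial : ℝ))) * Tf α w

lemma lemma2 (α β : ℝ) (V : ℕ → ℕ → ℝ) (n j : ℕ) (M c : ℕ) (hM : M ≤ m) :
    ∑ k ∈ Finset.Icc c (c + M), V (n+m) (j+k) * genStirlingNC α (-β) M (k - c)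
    = ((M.factorial : ℝ)) * Ufun α β V n j m M c := by
  have hL : ∑ k ∈ Finset.Icc c (c + M), V (n+m) (j+k) * genStirlingNC α (-β) M (k - c)
      = ∑ κ ∈ Finset.range (M+1), ∑ s ∈ Finset.Icc κ M,
          V (n+m) (j+c+κ) * ((M.choose s : ℝ) * (s.factorial : ℝ) * risingFac β (M-s)) *
            Wsum (gfun α) m s κ := by
    rw [← Finset.Ico_add_one_right_eq_Icc, Finset.sum_Ico_eq_sum_range]
    have h1 : c + M + 1 - c = M + 1 := by omega
    rw [h1]
    apply Finset.sum_congr rfl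
    intro κ hκ
    rw [Finset.mem_range] at hκ
    have h2 : c + κ - c = κ := by omega
    rw [h2, genStirlingNC]
    simp only [neg_neg]
    rw [Finset.mul_sum]
    apply Finset.sum_congr rfl
    intro s hs
    rw [Finset.mem_Icc] at hs
    rw [genStirling_eq (m := m) α s κ (by omega : s ≤ m)]
    rw [← add_assoc]
    ring
  rw [hL, Ufun]
  rw [← Finset.sum_fiberwise_of_maps_to (g := fun w => (kN w, sN w))
      (t := Finset.range (M+1) ×ˢ Finset.range (M+1))
      (by
        intro w hw
        have hs := (Finset.mem_filter.1 hw).2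
        have hk := kN_le_sN w
        simp only [Finset.mem_product, Finset.mem_range]
        exact ⟨by omega, by omega⟩)]
  rw [Finset.sum_product, Finset.mul_sum]
  apply Finset.sum_congr rfl
  intro κ hκ
  rw [Finset.mem_range] at hκ
  rw [Finset.mul_sum]
  have hsub : Finset.Icc κ M ⊆ Finset.range (M+1) := by
    intro s hs
    rw [Finset.mem_Icc] at hs
    rw [Finset.mem_range]
    omega
  rw [Finset.sum_subset hsub (by
    intro s hs1 hs2
    rw [Finset.mem_range] at hs1
    rw [Finset.mem_Icc] at hs2
    rw [Wsum_eq_zero_of_lt (gfun α) (by omega), mul_zero])]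
  apply Finset.sum_congr rfl
  intro s hs
  rw [Finset.mem_range] at hs
  by_cases hκs : κ ≤ s
  case neg =>
    have hempty : (Finset.filter (fun w => (kN w, sN w) = (κ, s))
        ((box m).filter (fun w => sN w ≤ M))) = ∅ := by
      rw [Finset.eq_empty_iff_forall_notMem]
      intro w hw
      have h4 := (Finset.mem_filter.1 hw).2
      rw [Prod.mk.injEq] at h4
      have := kN_le_sN w
      omega
    rw [hempty, Finset.sum_empty, mul_zero,
      Wsum_eq_zero_of_lt (gfun α) (by omega), mul_zero]
  have hset : (Finset.filter (fun w => (fun w => (kN w, sN w)) w = (κ, s))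
      ((box m).filter (fun w => sN w ≤ M))) = vecs m s κ := by
    rw [Finset.filter_filter, vecs]
    apply Finset.filter_congr
    intro w _
    rw [Prod.mk.injEq]
    constructor
    · rintro ⟨h1, h2, h3⟩; exact ⟨h3, h2⟩
    · rintro ⟨h1, h2⟩; exact ⟨by omega, h2, h1⟩
  rw [hset]
  have hsum : ∑ w ∈ vecs m s κ,
      V (n+m) (j + c + kN w) * (risingFac β (M - sN w) / (((M - sN w).factorial : ℝ))) * Tf α w
      = V (n+m) (j + c + κ) * (risingFac β (M - s) / (((M - s).factorial : ℝ))) *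
          Wsum (gfun α) m s κ := by
    rw [Wsum_Tf, Finset.mul_sum]
    apply Finset.sum_congr rfl
    intro w hw
    obtain ⟨h1, h2⟩ := (Finset.mem_filter.1 hw).2
    rw [h1, h2]
  rw [hsum]
  rw [Nat.cast_choose ℝ (by omega : s ≤ M)]
  have hf1 : ((s.factorial : ℝ)) ≠ 0 := Nat.cast_ne_zero.2 s.factorial_ne_zero
  have hf2 : (((M-s).factorial : ℝ)) ≠ 0 := Nat.cast_ne_zero.2 (M-s).factorial_ne_zero
  field_simp

lemma sum_fix_coord (α : ℝ) (l0 : Fin m) (q N : ℕ) (hN : N ≤ m) (hq : (l0.1+1)*q ≤ N)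
    (F : ℕ → ℕ → ℝ) :
    ∑ w ∈ (box m).filter (fun w => sN w ≤ N ∧ w l0 = q), F (kN w) (sN w) * Tf α w
    = (risingFac (1-α) l0.1 ^ q / (((l0.1+1).factorial : ℝ) ^ q * (q.factorial : ℝ))) *
      ∑ w ∈ (box m).filter (fun w => sN w ≤ N - (l0.1+1)*q ∧ w l0 = 0),
        F (kN w + q) (sN w + (l0.1+1)*q) * Tf α w := by
  rw [Finset.mul_sum]
  apply Finset.sum_nbij' (i := fun w => Function.update w l0 0)
    (j := fun v => Function.update v l0 q)
  · intro w hw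
    obtain ⟨hwb, hws, hwl⟩ := Finset.mem_filter.1 hw
    have h1 := sN_update w l0 0
    rw [hwl] at h1
    refine Finset.mem_filter.2 ⟨mem_box_of _ (by omega), by omega, Function.update_self _ _ _⟩
  · intro v hv
    obtain ⟨hvb, hvs, hvl⟩ := Finset.mem_filter.1 hv
    have h1 := sN_update v l0 q
    rw [hvl] at h1
    simp only [Nat.mul_zero, Nat.add_zero] at h1
    refine Finset.mem_filter.2 ⟨mem_box_of _ (by omega), by omega, Function.update_self _ _ _⟩
  · intro w hw
    obtain ⟨hwb, hws, hwl⟩ := Finset.mem_filter.1 hw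
    funext i2
    rcases eq_or_ne i2 l0 with rfl | hne
    · simp only [Function.update_self]
      omega
    · simp only [Function.update_of_ne hne]
  · intro v hv
    obtain ⟨hvb, hvs, hvl⟩ := Finset.mem_filter.1 hv
    funext i2
    rcases eq_or_ne i2 l0 with rfl | hne
    · simp only [Function.update_self]
      omega
    · simp only [Function.update_of_ne hne]
  · intro w hw
    obtain ⟨hwb, hws, hwl⟩ := Finset.mem_filter.1 hw
    have hk := kN_update w l0 0
    have hs := sN_update w l0 0
    rw [hwl] at hk hs
    have hk' : kN (Function.update w l0 0) + q = kN w := by omega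
    have hs' : sN (Function.update w l0 0) + (l0.1+1)*q = sN w := by omega
    rw [hk', hs']
    rw [show Tf α w = (risingFac (1-α) l0.1 ^ (w l0) /
        (((l0.1+1).factorial : ℝ) ^ (w l0) * ((w l0).factorial : ℝ))) *
        ∏ i2 ∈ Finset.univ \ {l0}, (risingFac (1 - α) i2.1) ^ (w i2) /
          ((Nat.factorial (i2.1 + 1) : ℝ) ^ (w i2) * (Nat.factorial (w i2) : ℝ)) from
      Finset.prod_eq_mul_prod_sdiff_singleton_of_mem (Finset.mem_univ l0) _]
    rw [show Tf α (Function.update w l0 0) = (risingFac (1-α) l0.1 ^ 0 /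
        (((l0.1+1).factorial : ℝ) ^ 0 * ((0:ℕ).factorial : ℝ))) *
        ∏ i2 ∈ Finset.univ \ {l0}, (risingFac (1 - α) i2.1) ^ (w i2) /
          ((Nat.factorial (i2.1 + 1) : ℝ) ^ (w i2) * (Nat.factorial (w i2) : ℝ)) from
      prod_update_split (fun i2 c => (risingFac (1 - α) i2.1) ^ c /
        ((Nat.factorial (i2.1 + 1) : ℝ) ^ c * (Nat.factorial c : ℝ))) w l0 0]
    rw [hwl]
    simp only [pow_zero, Nat.factorial_zero, Nat.cast_one, mul_one, one_mul, div_one]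
    ring


noncomputable def Hfun (α β : ℝ) (V : ℕ → ℕ → ℝ) (n j m l x : ℕ) (l0 : Fin m) (t : ℕ) : ℝ :=
  ∑ w ∈ (box m).filter (fun w => sN w ≤ m - l*(x+t) ∧ w l0 = 0),
    V (n+m) (j + (x+t) + kN w) *
      (risingFac β ((m - l*(x+t)) - sN w) / (((m - l*(x+t)) - sN w).factorial : ℝ)) * Tf α w

lemma lemma3 (α β : ℝ) (V : ℕ → ℕ → ℝ) (n j l x r : ℕ) (l0 : Fin m)
    (hl0 : l0.1 + 1 = l) (hlxr : l*(x+r) ≤ m) :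
    Ufun α β V n j m (m - l*(x+r)) (r+x)
    = ∑ q ∈ Finset.range (m/l - x - r + 1),
        (risingFac (1-α) (l-1) ^ q / ((l.factorial : ℝ) ^ q * (q.factorial : ℝ))) *
          Hfun α β V n j m l x l0 (r+q) := by
  have hl1 : 0 < l := by omega
  set M := m - l*(x+r) with hMdef
  rw [Ufun]
  rw [← Finset.sum_fiberwise_of_maps_to (g := fun w => w l0) (t := Finset.range (M+1))
    (by
      intro w hw
      have hs := (Finset.mem_filter.1 hw).2
      have h1 := coord_le_sN w l0
      have h2 : w l0 ≤ (l0.1+1) * w l0 := Nat.le_mul_of_pos_left _ (Nat.succ_pos _)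
      simp only [Finset.mem_range]
      omega)]
  have hdiv : M / l = m / l - x - r := by
    rw [hMdef, Nat.sub_mul_div m l (x+r) ]
    omega
  have hsub : Finset.range (M / l + 1) ⊆ Finset.range (M+1) := by
    apply Finset.range_subset_range.2
    have := Nat.div_le_self M l
    omega
  rw [← Finset.sum_subset hsub (by
    intro q hq1 hq2
    rw [Finset.mem_range] at hq1 hq2
    push_neg at hq2
    have h8 := (Nat.div_lt_iff_lt_mul hl1).1 (show M / l < q by omega)
    rw [Nat.mul_comm] at h8
    apply Finset.sum_eq_zero
    intro w hw
    exfalso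
    have h4 : w l0 = q := (Finset.mem_filter.1 hw).2
    have h5 : sN w ≤ M := (Finset.mem_filter.1 (Finset.mem_filter.1 hw).1).2
    have h6 := coord_le_sN w l0
    rw [h4, hl0] at h6
    omega)]
  rw [hdiv]
  apply Finset.sum_congr rfl
  intro q hq
  rw [Finset.mem_range] at hq
  have hqM : q ≤ M / l := by omega
  have hq2 : (l0.1+1) * q ≤ M := by
    have h9 := (Nat.le_div_iff_mul_le hl1).1 hqM
    rw [Nat.mul_comm] at h9
    rw [hl0]
    exact h9
  rw [Finset.filter_filter]
  have hfix := sum_fix_coord (m := m) α l0 q M (by omega) hq2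
    (fun k s => V (n+m) (j + (r+x) + k) * (risingFac β (M - s) / ((M - s).factorial : ℝ)))
  rw [hfix, hl0, show l0.1 = l - 1 from by omega]
  have hset2 : M - l*q = m - l*(x+(r+q)) := by
    have h10 : l*(x+r) + l*q = l*(x+(r+q)) := by ring
    omega
  rw [hset2]
  congr 1
  rw [Hfun]
  apply Finset.sum_congr rfl
  intro w hw
  have hwmem : sN w ≤ m - l*(x+(r+q)) := ((Finset.mem_filter.1 hw).2).1
  have e1 : j + (r+x) + (kN w + q) = j + (x+(r+q)) + kN w := by omega
  have e2 : M - (sN w + l*q) = (m - l*(x+(r+q))) - sN w := by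
    have h10 : l*(x+r) + l*q = l*(x+(r+q)) := by ring
    omega
  rw [e1, e2]

lemma triangle (R : ℕ) (f : ℕ → ℕ → ℝ) :
    ∑ r ∈ Finset.range (R+1), ∑ q ∈ Finset.range (R - r + 1), f r q
    = ∑ t ∈ Finset.range (R+1), ∑ r ∈ Finset.range (t+1), f r (t - r) := by
  rw [Finset.sum_sigma', Finset.sum_sigma']
  apply Finset.sum_nbij' (i := fun p => (⟨p.1 + p.2, p.1⟩ : Σ _ : ℕ, ℕ))
    (j := fun p => (⟨p.2, p.1 - p.2⟩ : Σ _ : ℕ, ℕ))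
  · intro p hp
    simp only [Finset.mem_sigma, Finset.mem_range] at hp ⊢
    omega
  · intro p hp
    simp only [Finset.mem_sigma, Finset.mem_range] at hp ⊢
    omega
  · intro p hp
    simp only [Finset.mem_sigma, Finset.mem_range] at hp
    refine Sigma.ext ?_ (heq_of_eq ?_) <;> simp <;> omega
  · intro p hp
    simp only [Finset.mem_sigma, Finset.mem_range] at hp
    refine Sigma.ext ?_ (heq_of_eq ?_) <;> simp <;> omega
  · intro p hp
    simp only [Finset.mem_sigma, Finset.mem_range] at hp
    have : p.1 + p.2 - p.1 = p.2 := by omega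
    simp only [this]

lemma alt_sum (t : ℕ) :
    ∑ r ∈ Finset.range (t+1), (-1:ℝ)^r / ((r.factorial : ℝ) * ((t-r).factorial : ℝ))
    = if t = 0 then 1 else 0 := by
  have h1 : ∀ r ∈ Finset.range (t+1), (-1:ℝ)^r / ((r.factorial : ℝ) * ((t-r).factorial : ℝ))
      = ((-1:ℝ)^r * (t.choose r : ℝ)) / (t.factorial : ℝ) := by
    intro r hr
    rw [Finset.mem_range] at hr
    rw [Nat.cast_choose ℝ (by omega : r ≤ t)]
    have h2 : ((r.factorial : ℝ)) ≠ 0 := Nat.cast_ne_zero.2 (Nat.factorial_ne_zero _)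
    have h3 : (((t-r).factorial : ℝ)) ≠ 0 := Nat.cast_ne_zero.2 (Nat.factorial_ne_zero _)
    have h4 : ((t.factorial : ℝ)) ≠ 0 := Nat.cast_ne_zero.2 (Nat.factorial_ne_zero _)
    field_simp
  rw [Finset.sum_congr rfl h1, ← Finset.sum_div]
  have h3 : ∑ r ∈ Finset.range (t+1), (-1:ℝ)^r * (t.choose r : ℝ)
      = if t = 0 then 1 else 0 := by
    have h5 := Int.alternating_sum_range_choose (n := t)
    have h4 := congrArg (fun z : ℤ => (z : ℝ)) h5
    push_cast at h4
    rw [h4]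
  rw [h3]
  rcases eq_or_ne t 0 with rfl | ht
  · simp
  · simp [ht]

lemma mainLemma (n j m : ℕ) (hm : 1 ≤ m) (α : ℝ) (V : ℕ → ℕ → ℝ)
    (l x : ℕ) (hl : 1 ≤ l) (hlm : l ≤ m) (hx : x ≤ m / l)
    (l0 : Fin m) (hl0 : l0.1 + 1 = l) :
    ∑ w ∈ (condCountVectors m).filter (fun w => w l0 = x), condSampling α V n j m w =
      (risingFac (1 - α) (l - 1)) ^ x /
          ((Nat.factorial x : ℝ) * (Nat.factorial l : ℝ) ^ x) *
        ((Nat.factorial m : ℝ) / V n j) *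
        ∑ r ∈ Finset.range (m / l - x + 1),
          (-1 : ℝ) ^ r * (risingFac (1 - α) (l - 1)) ^ r /
              ((Nat.factorial r : ℝ) * (Nat.factorial l : ℝ) ^ r *
                (Nat.factorial (m - r * l - x * l) : ℝ)) *
            ∑ k ∈ Finset.Icc (r + x) (r + x + (m - r * l - x * l)),
              V (n + m) (j + k) *
                genStirlingNC α (-((n : ℝ) - j * α)) (m - r * l - x * l)
                  (k - r - x) := by
  set β : ℝ := (n : ℝ) - j * α with hβ
  have hl1 : 0 < l := hl
  have hxl : l * x ≤ m := by
    have h := (Nat.le_div_iff_mul_le hl1).1 hx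
    rw [Nat.mul_comm] at h
    exact h
  -- LHS
  have hset : (condCountVectors m).filter (fun w => w l0 = x)
      = (box m).filter (fun w => sN w ≤ m ∧ w l0 = x) := by
    rw [show condCountVectors m = (box m).filter (fun w => sN w ≤ m) from rfl,
      Finset.filter_filter]
  have hcs : ∀ w : Fin m → ℕ, condSampling α V n j m w
      = (fun k s => (m.factorial : ℝ) * (V (n+m) (j+k) / V n j) *
          (risingFac β (m - s) / (((m - s).factorial : ℝ)))) (kN w) (sN w) * Tf α w :=
    fun w => rfl
  have hL : ∑ w ∈ (condCountVectors m).filter (fun w => w l0 = x), condSampling α V n j m w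
      = (risingFac (1-α) (l-1) ^ x / ((l.factorial : ℝ) ^ x * (x.factorial : ℝ))) *
        (((m.factorial : ℝ) / V n j) * Hfun α β V n j m l x l0 0) := by
    rw [hset]
    rw [Finset.sum_congr rfl (fun w _ => hcs w)]
    have hq2 : (l0.1+1) * x ≤ m := by rw [hl0]; exact hxl
    have hfix := sum_fix_coord (m := m) α l0 x m le_rfl hq2
      (fun k s => (m.factorial : ℝ) * (V (n+m) (j+k) / V n j) *
          (risingFac β (m - s) / (((m - s).factorial : ℝ))))
    simp only [] at hfix ⊢
    rw [hfix, hl0, show l0.1 = l - 1 from by omega]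
    congr 1
    rw [show m - l*x = m - l*(x+0) from by norm_num]
    rw [Hfun, Finset.mul_sum]
    apply Finset.sum_congr rfl
    intro w hw
    have hwmem : sN w ≤ m - l*(x+0) := ((Finset.mem_filter.1 hw).2).1
    have e1 : j + (kN w + x) = j + (x+0) + kN w := by omega
    have e2 : m - (sN w + l*x) = (m - l*(x+0)) - sN w := by
      have h10 : l*(x+0) = l*x := by ring
      omega
    rw [e1, e2]
    ring
  -- RHS
  have hRr : ∀ r ∈ Finset.range (m/l - x + 1),
      (-1:ℝ)^r * risingFac (1-α) (l-1) ^ r /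
          ((r.factorial : ℝ) * (l.factorial : ℝ)^r * ((m - r*l - x*l).factorial : ℝ)) *
        ∑ k ∈ Finset.Icc (r+x) (r+x+(m - r*l - x*l)),
          V (n+m) (j+k) * genStirlingNC α (-β) (m - r*l - x*l) (k - r - x)
      = ∑ q ∈ Finset.range (m/l - x - r + 1),
          ((-1:ℝ)^r * risingFac (1-α) (l-1) ^ r /
              ((r.factorial : ℝ) * (l.factorial:ℝ)^r)) *
            ((risingFac (1-α) (l-1) ^ q / ((l.factorial : ℝ)^q * (q.factorial : ℝ))) *
              Hfun α β V n j m l x l0 (r+q)) := by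
    intro r hr
    rw [Finset.mem_range] at hr
    have hlxr : l*(x+r) ≤ m := by
      have h7 : x + r ≤ m / l := by omega
      have h8 := (Nat.le_div_iff_mul_le hl1).1 h7
      rw [Nat.mul_comm] at h8
      exact h8
    have hM : m - r*l - x*l = m - l*(x+r) := by
      have h10 : r*l + x*l = l*(x+r) := by ring
      omega
    rw [hM]
    rw [Finset.sum_congr rfl (fun k _ => by rw [Nat.sub_sub])]
    rw [lemma2 α β V n j (m - l*(x+r)) (r+x) (by omega)]
    rw [lemma3 α β V n j l x r l0 hl0 hlxr]
    rw [Finset.mul_sum, Finset.mul_sum]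
    apply Finset.sum_congr rfl
    intro q _
    have h1 : ((r.factorial : ℝ)) ≠ 0 := Nat.cast_ne_zero.2 (Nat.factorial_ne_zero _)
    have h2 : ((l.factorial : ℝ)) ≠ 0 := Nat.cast_ne_zero.2 (Nat.factorial_ne_zero _)
    have h3 : ((q.factorial : ℝ)) ≠ 0 := Nat.cast_ne_zero.2 (Nat.factorial_ne_zero _)
    have h4 : (((m - l*(x+r)).factorial : ℝ)) ≠ 0 :=
      Nat.cast_ne_zero.2 (Nat.factorial_ne_zero _)
    field_simp
  rw [Finset.sum_congr rfl hRr]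
  have htri := triangle (m/l - x) (fun r q =>
    ((-1:ℝ)^r * risingFac (1-α) (l-1) ^ r /
        ((r.factorial : ℝ) * (l.factorial:ℝ)^r)) *
      ((risingFac (1-α) (l-1) ^ q / ((l.factorial : ℝ)^q * (q.factorial : ℝ))) *
        Hfun α β V n j m l x l0 (r+q)))
  rw [htri]
  have hfin : ∑ t ∈ Finset.range (m/l - x + 1), ∑ r ∈ Finset.range (t+1),
      ((-1:ℝ)^r * risingFac (1-α) (l-1) ^ r /
          ((r.factorial : ℝ) * (l.factorial:ℝ)^r)) *
        ((risingFac (1-α) (l-1) ^ (t-r) /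
            ((l.factorial : ℝ)^(t-r) * ((t-r).factorial : ℝ))) *
          Hfun α β V n j m l x l0 (r+(t-r)))
      = Hfun α β V n j m l x l0 0 := by
    rw [Finset.sum_eq_single_of_mem 0 (Finset.mem_range.2 (Nat.succ_pos _)) ?hother]
    · rw [Finset.sum_range_one]
      norm_num
    case hother =>
      intro t ht htne
      have hstep : ∀ r ∈ Finset.range (t+1),
          ((-1:ℝ)^r * risingFac (1-α) (l-1) ^ r /
              ((r.factorial : ℝ) * (l.factorial:ℝ)^r)) *
            ((risingFac (1-α) (l-1) ^ (t-r) /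
                ((l.factorial : ℝ)^(t-r) * ((t-r).factorial : ℝ))) *
              Hfun α β V n j m l x l0 (r+(t-r)))
          = (risingFac (1-α) (l-1) ^ t / (l.factorial:ℝ)^t *
              Hfun α β V n j m l x l0 t) *
            ((-1:ℝ)^r / ((r.factorial : ℝ) * ((t-r).factorial : ℝ))) := by
        intro r hr
        rw [Finset.mem_range] at hr
        have h9 : r + (t - r) = t := by omega
        rw [h9]
        have ha : risingFac (1-α) (l-1) ^ t
            = risingFac (1-α) (l-1) ^ r * risingFac (1-α) (l-1) ^ (t-r) := by
          rw [← pow_add, h9]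
        have hb : (l.factorial:ℝ) ^ t = (l.factorial:ℝ)^r * (l.factorial:ℝ)^(t-r) := by
          rw [← pow_add, h9]
        rw [ha, hb]
        have h1 : ((r.factorial : ℝ)) ≠ 0 := Nat.cast_ne_zero.2 (Nat.factorial_ne_zero _)
        have h2 : ((l.factorial : ℝ)) ≠ 0 := Nat.cast_ne_zero.2 (Nat.factorial_ne_zero _)
        have h3 : (((t-r).factorial : ℝ)) ≠ 0 := Nat.cast_ne_zero.2 (Nat.factorial_ne_zero _)
        field_simp
      rw [Finset.sum_congr rfl hstep, ← Finset.mul_sum, alt_sum t, if_neg htne, mul_zero]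
  rw [hfin, hL]
  ring

end CondLaw

/-- The law of the number of new blocks of size `l` under the conditional
Gibbs sampling formula. -/
theorem condSampling_law_of_size_l (n j m : ℕ)
    (hn : 1 ≤ n) (hj : 1 ≤ j) (hm : 1 ≤ m) (hjn : j ≤ n)
    (nv : Fin j → ℕ) (hnv : ∀ i, 0 < nv i) (hsum : ∑ i, nv i = n)
    (α : ℝ) (hα : α < 1) (V : ℕ → ℕ → ℝ) (hV : V n j ≠ 0)
    (l x : ℕ) (hl : 1 ≤ l) (hlm : l ≤ m) (hx : x ≤ m / l) :
    ∑ w ∈ (condCountVectors m).filter (fun w => w ⟨l - 1, by omega⟩ = x),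
        condSampling α V n j m w =
      (risingFac (1 - α) (l - 1)) ^ x /
          ((Nat.factorial x : ℝ) * (Nat.factorial l : ℝ) ^ x) *
        ((Nat.factorial m : ℝ) / V n j) *
        ∑ r ∈ Finset.range (m / l - x + 1),
          (-1 : ℝ) ^ r * (risingFac (1 - α) (l - 1)) ^ r /
              ((Nat.factorial r : ℝ) * (Nat.factorial l : ℝ) ^ r *
                (Nat.factorial (m - r * l - x * l) : ℝ)) *
            ∑ k ∈ Finset.Icc (r + x) (r + x + (m - r * l - x * l)),
              V (n + m) (j + k) *
                genStirlingNC α (-((n : ℝ) - j * α)) (m - r * l - x * l)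
                  (k - r - x) := by
  exact CondLaw.mainLemma n j m hm α V l x hl hlm hx ⟨l - 1, by omega⟩
    (by show l - 1 + 1 = l; omega)
end
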